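/- Let (Ω_α)_{α ∈ Ord} enumerate the infinite regular cardinals in increasing order (so Ω_0 = ℵ_0). Let Θ be an ordinal equipped with the club topology τ_c. Then for every nonzero ordinal α and every ξ < Θ, the rank satisfies ρ_{τ_c}(ξ) = α if and only if cf(ξ) = Ω_α; equivalently, for every α > 0, ξ ∈ d^α_{τ_c}(Θ) if and only if cf(ξ) ≥ Ω_α. -/

import Mathlib

open Ordinal Set

noncomputable section

universe u

/-! ## Basic topological notions (explicit topologies) -/

/-- The derived set (set of limit points) of `A` w.r.t. the topology `t`. -/
def dSet {X : Type u} (t : TopologicalSpace X) (A : Set X) : Set X :=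
  {x | ∀ U : Set X, t.IsOpen U → x ∈ U → ∃ y, y ∈ U ∩ A ∧ y ≠ x}

/-- Transfinite iterates of the derived-set operator, starting from the whole space. -/
def dIter {X : Type u} (t : TopologicalSpace X) (o : Ordinal.{u}) : Set X :=
  Ordinal.limitRecOn o Set.univ (fun _ ih => dSet t ih)
    (fun o _ ih => ⋂ (o' : Ordinal.{u}) (h : o' < o), ih o' h)

/-- The Cantor–Bendixson rank of a point: the least `ξ` with `x ∉ d^{ξ+1} X`. -/
def ptRank {X : Type u} (t : TopologicalSpace X) (x : X) : Ordinal.{u} :=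
  sInf {ξ : Ordinal.{u} | x ∉ dIter t (ξ + 1)}

/-- The rank of a space: `sup_{x ∈ X} (ρ(x) + 1)`. -/
def spRank (X : Type u) (t : TopologicalSpace X) : Ordinal.{u} :=
  ⨆ x : X, ptRank t x + 1

/-- A space is scattered if every nonempty subset has an isolated point. -/
def IsScattered {X : Type u} (t : TopologicalSpace X) : Prop :=
  ∀ A : Set X, A.Nonempty → ∃ x ∈ A, ∃ U : Set X, t.IsOpen U ∧ U ∩ A = {x}

/-- A `d`-map: continuous, open and pointwise discrete. -/
def IsDMap {X : Type u} {Y : Type*} (t : TopologicalSpace X) (s : TopologicalSpace Y)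
    (f : X → Y) : Prop :=
  @Continuous _ _ t s f ∧ @IsOpenMap _ _ t s f ∧
    ∀ y : Y, ∀ x : X, f x = y →
      ∃ U : Set X, t.IsOpen U ∧ x ∈ U ∧ ∀ z ∈ U, f z = y → z = x

/-! ## Hyperexponentials and hyperlogarithms -/

/-- The exponential `e ξ = -1 + ω^ξ`. -/
def eFun (x : Ordinal.{u}) : Ordinal.{u} := ω ^ x - 1

/-- `E` is the family of hyperexponentials: a family of normal functions with `E 1 = e`,
`E (α+β) = E α ∘ E β`, pointwise minimal among all such families. -/
def IsHyperexpFamily (E : Ordinal.{u} → Ordinal.{u} → Ordinal.{u}) : Prop :=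
  (∀ a, Order.IsNormal (E a)) ∧ E 1 = eFun ∧ (∀ a b, E (a + b) = E a ∘ E b) ∧
    ∀ F : Ordinal.{u} → Ordinal.{u} → Ordinal.{u},
      (∀ a, Order.IsNormal (F a)) → F 1 = eFun → (∀ a b, F (a + b) = F a ∘ F b) →
        ∀ a b, E a b ≤ F a b

/-- The end logarithm: `ℓ 0 = 0` and `ℓ ξ` is the unique `β` with `ξ = α + ω^β`. -/
def ellFun (x : Ordinal.{u}) : Ordinal.{u} :=
  if x = 0 then 0 else sInf {b : Ordinal.{u} | ∃ a, x = a + ω ^ b}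

/-- An initial function maps initial segments onto initial segments. -/
def IsInitialFun (f : Ordinal.{u} → Ordinal.{u}) : Prop :=
  ∀ o : Ordinal.{u}, ∃ o' : Ordinal.{u}, f '' Set.Iio o = Set.Iio o'

/-- `L` is the family of hyperlogarithms: a family of initial functions with `L 1 = ℓ`,
`L (α+β) = L β ∘ L α`, pointwise maximal among all such families. -/
def IsHyperlogFamily (L : Ordinal.{u} → Ordinal.{u} → Ordinal.{u}) : Prop :=
  (∀ a, IsInitialFun (L a)) ∧ L 1 = ellFun ∧ (∀ a b, L (a + b) = L b ∘ L a) ∧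
    ∀ M : Ordinal.{u} → Ordinal.{u} → Ordinal.{u},
      (∀ a, IsInitialFun (M a)) → M 1 = ellFun → (∀ a b, M (a + b) = M b ∘ M a) →
        ∀ a b, M a b ≤ L a b

/-! ## Icard topologies -/

/-- The generalized Icard topology `τ_λ` based on a space `(X, t)`, relative to a family `L`
of hyperlogarithms: the least topology containing `t` and all sets
`(α, β]_ξ = {x | α < ℓ^ξ ρ_t(x) ≤ β}` (including `α = -1`, i.e. `[0, β]_ξ`), for `ξ < λ`. -/
def IcardTop {X : Type u} (L : Ordinal.{u} → Ordinal.{u} → Ordinal.{u})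
    (t : TopologicalSpace X) (lam : Ordinal.{u}) : TopologicalSpace X :=
  t ⊓ TopologicalSpace.generateFrom
    {S : Set X | ∃ ξ < lam,
      (∃ b : Ordinal.{u}, S = {x | L ξ (ptRank t x) ≤ b}) ∨
      (∃ a b : Ordinal.{u}, a < b ∧ S = {x | a < L ξ (ptRank t x) ∧ L ξ (ptRank t x) ≤ b})}

/-! ## Ordinal spaces -/

/-- The ordinal corresponding to a point of `Θ.ToType`. -/
def ordVal {Θ : Ordinal.{u}} (x : Θ.ToType) : Ordinal.{u} :=
  @Ordinal.typein Θ.ToType (· < ·) isWellOrder_lt x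

/-- The left topology `I₀` on (the canonical type of order type) `Θ`, generated by the
intervals `[0, β]`. -/
def leftTop (Θ : Ordinal.{u}) : TopologicalSpace Θ.ToType :=
  TopologicalSpace.generateFrom {S : Set Θ.ToType | ∃ b : Θ.ToType, S = Set.Iic b}

/-- The interval topology `I₁` on `Θ`, generated by the sets `[0, β]` and `(α, β]`. -/
def intervalTop (Θ : Ordinal.{u}) : TopologicalSpace Θ.ToType :=
  TopologicalSpace.generateFrom
    {S : Set Θ.ToType | (∃ b, S = Set.Iic b) ∨ ∃ a b : Θ.ToType, S = Set.Ioc a b}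

/-- The Icard topology `I_λ = (I₀)_λ` on the ordinal `Θ`: the least topology containing the
left topology and all sets `{x < Θ | α < ℓ^ξ x ≤ β}` for `ξ < λ`. -/
def ordIcard (L : Ordinal.{u} → Ordinal.{u} → Ordinal.{u}) (Θ lam : Ordinal.{u}) :
    TopologicalSpace Θ.ToType :=
  leftTop Θ ⊓ TopologicalSpace.generateFrom
    {S : Set Θ.ToType | ∃ ξ < lam,
      (∃ b : Ordinal.{u}, S = {x | L ξ (ordVal x) ≤ b}) ∨
      (∃ a b : Ordinal.{u}, a < b ∧ S = {x | a < L ξ (ordVal x) ∧ L ξ (ordVal x) ≤ b})}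

/-! ## Modal logic: GL and topological (d-)semantics -/

/-- Formulas of the basic modal language. -/
inductive Fml : Type
  | bot : Fml
  | var : ℕ → Fml
  | imp : Fml → Fml → Fml
  | box : Fml → Fml

namespace Fml

/-- Negation. -/
def neg (p : Fml) : Fml := p.imp .bot

/-- Diamond. -/
def dia (p : Fml) : Fml := (p.neg.box).neg

end Fml

/-- The valuation determined by an assignment `V` of sets to propositional variables, in the
`d`-semantics: `⟦◇φ⟧ = d⟦φ⟧`, i.e. `⟦◻φ⟧` is the complement of the derived set of the
complement of `⟦φ⟧`. -/
def fval {X : Type u} (t : TopologicalSpace X) (V : ℕ → Set X) : Fml → Set X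
  | .bot => ∅
  | .var n => V n
  | .imp p q => (fval t V p)ᶜ ∪ fval t V q
  | .box p => (dSet t (fval t V p)ᶜ)ᶜ

/-- Classical tautologies (boxed formulas and variables treated as atoms). -/
def Tautology (φ : Fml) : Prop :=
  ∀ v : Fml → Bool, v .bot = false → (∀ p q : Fml, v (p.imp q) = (!(v p) || v q)) →
    v φ = true

/-- Provability in the Gödel–Löb provability logic `GL`. -/
inductive GLProv : Fml → Prop
  | taut {φ : Fml} : Tautology φ → GLProv φ
  | axK (p q : Fml) : GLProv (((p.imp q).box).imp ((p.box).imp q.box))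
  | axLob (p : Fml) : GLProv ((((p.box).imp p).box).imp p.box)
  | mp {p q : Fml} : GLProv (p.imp q) → GLProv p → GLProv q
  | nec {p : Fml} : GLProv p → GLProv p.box

/-- A set of formulas is GL-consistent if no finite conjunction of its members provably
implies `⊥`. -/
def GLConsistent (Γ : Set Fml) : Prop :=
  ¬ ∃ l : List Fml, (∀ φ ∈ l, φ ∈ Γ) ∧ GLProv (l.foldr .imp .bot)

/-- `Γ` is satisfied in the space `(X, t)`. -/
def SatisfiedIn {X : Type u} (t : TopologicalSpace X) (Γ : Set Fml) : Prop :=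
  ∃ (V : ℕ → Set X) (x : X), ∀ φ ∈ Γ, x ∈ fval t V φ

/-- `GL` is strongly complete with respect to `(X, t)`. -/
def StronglyCompleteFor {X : Type u} (t : TopologicalSpace X) : Prop :=
  ∀ Γ : Set Fml, GLConsistent Γ → SatisfiedIn t Γ

/-- Validity of a formula in a space under the `d`-semantics. -/
def ValidIn {X : Type u} (t : TopologicalSpace X) (φ : Fml) : Prop :=
  ∀ V : ℕ → Set X, fval t V φ = Set.univ

/-! ## Trees and ω-bouquets -/

/-- The upset topology of a relation: opens are the `R`-upward closed sets. -/
def upTop {T : Type u} (R : T → T → Prop) : TopologicalSpace T where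
  IsOpen U := ∀ x ∈ U, ∀ y, R x y → y ∈ U
  isOpen_univ := fun x _ y _ => trivial
  isOpen_inter := fun s t hs ht x hx y hR => ⟨hs x hx.1 y hR, ht x hx.2 y hR⟩
  isOpen_sUnion := fun S hS x hx y hR => by
    obtain ⟨s, hsS, hxs⟩ := hx
    exact ⟨s, hsS, hS s hsS x hxs y hR⟩

/-- A countable, converse well-founded tree. -/
structure IsOmegaTree {T : Type u} (R : T → T → Prop) : Prop where
  countable : Countable T
  trans : ∀ a b c, R a b → R b c → R a c
  irrefl : ∀ a, ¬ R a a
  predWellOrdered : ∀ t : T, IsWellOrder {s : T // R s t} (fun a b => R a.1 b.1)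
  root : ∃! r : T, ∀ s : T, ¬ R s r
  converseWellFounded : WellFounded (fun a b : T => R b a)

/-- The daughters (immediate successors) of a node. -/
def daughters {T : Type u} (R : T → T → Prop) (w : T) : Set T :=
  {v | R w v ∧ ¬ ∃ u, R w u ∧ R u v}

/-- The bouquet topology `σ_R`: the least topology extending the upset topology such that
whenever `w` has limit rank, `(v_i)` enumerates the daughters of `w` without repetition and
`n < ω`, the set `{w} ∪ ⋃_{i > n} ({v_i} ∪ R(v_i))` is open. -/
def sigmaTop {T : Type u} (R : T → T → Prop) : TopologicalSpace T :=
  upTop R ⊓ TopologicalSpace.generateFrom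
    {S : Set T | ∃ w : T, Order.IsSuccLimit (ptRank (upTop R) w) ∧
      ∃ v : ℕ → T, Function.Injective v ∧ Set.range v = daughters R w ∧
        ∃ n : ℕ, S = {w} ∪ ⋃ (i : ℕ) (_ : n < i), ({v i} ∪ {u | R (v i) u})}

/-! ## The club topology (via its neighborhood characterization) -/

/-- `C` is a club in (i.e. a closed unbounded subset of) the point `x`. -/
def IsClubIn {Θ : Ordinal.{u}} (C : Set Θ.ToType) (x : Θ.ToType) : Prop :=
  (∀ y ∈ C, y < x) ∧ (∀ z, z < x → ∃ y ∈ C, z < y) ∧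
    ∀ z, z < x → (∃ w, w < z) → (∀ w, w < z → ∃ y ∈ C, w < y ∧ y < z) → z ∈ C

/-- `t` is the club topology on `Θ`: a set `U` is a neighborhood of a point `x ∈ U` iff
`U` contains a club in `x` or `cf(x) < ℵ₁`. -/
def IsClubTop (Θ : Ordinal.{u}) (t : TopologicalSpace Θ.ToType) : Prop :=
  ∀ (U : Set Θ.ToType) (x : Θ.ToType), x ∈ U →
    (U ∈ @nhds _ t x ↔
      (Ordinal.cof (ordVal x) < Cardinal.aleph 1 ∨ ∃ C ⊆ U, IsClubIn C x))

/-- The increasing enumeration `Ω` of the infinite regular cardinals (as cardinals). -/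
def regularEnum (α : Ordinal.{u}) : Cardinal.{u} :=
  (Ordinal.enumOrd {o : Ordinal.{u} | ∃ c : Cardinal.{u}, c.IsRegular ∧ o = c.ord} α).card

/-! ## Auxiliary material for Statement 12 -/

section AuxClub

open Cardinal

/-- An "ordinal club" in `ξ`: bounded by `ξ`, unbounded in `ξ`, and closed. -/
def OrdClub (S : Set Ordinal.{u}) (ξ : Ordinal.{u}) : Prop :=
  (∀ s ∈ S, s < ξ) ∧ (∀ z < ξ, ∃ s ∈ S, z < s) ∧
    (∀ z < ξ, 0 < z → (∀ w < z, ∃ s ∈ S, w < s ∧ s < z) → z ∈ S)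

variable {Θ : Ordinal.{u}}

lemma ordVal_lt_ordVal {x y : Θ.ToType} : ordVal x < ordVal y ↔ x < y :=
  (@Ordinal.typein Θ.ToType (· < ·) isWellOrder_lt).map_rel_iff

lemma ordVal_lt_theta (x : Θ.ToType) : ordVal x < Θ :=
  Ordinal.typein_lt_self x

lemma ordVal_surj {o : Ordinal.{u}} (h : o < Θ) : ∃ x : Θ.ToType, ordVal x = o := by
  have h2 : o < (@Ordinal.typein Θ.ToType (· < ·) isWellOrder_lt).top := by
    rw [Ordinal.top_typein, Ordinal.type_toType]
    exact h
  obtain ⟨x, hx⟩ := (@Ordinal.typein Θ.ToType (· < ·) isWellOrder_lt).mem_range_of_rel_top h2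
  exact ⟨x, hx⟩

lemma ordVal_pos_iff {z : Θ.ToType} : 0 < ordVal z ↔ ∃ w, w < z := by
  constructor
  · intro h0
    obtain ⟨w, hw⟩ := ordVal_surj (h0.trans (ordVal_lt_theta z))
    exact ⟨w, ordVal_lt_ordVal.1 (by rw [hw]; exact h0)⟩
  · rintro ⟨w, hw⟩
    exact (zero_le (a := _)).trans_lt (ordVal_lt_ordVal.2 hw)

lemma IsClubIn.ordClub {C : Set Θ.ToType} {x : Θ.ToType} (h : IsClubIn C x) :
    OrdClub (ordVal '' C) (ordVal x) := by
  obtain ⟨hb, hu, hc⟩ := h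
  refine ⟨?_, ?_, ?_⟩
  · rintro s ⟨y, hy, rfl⟩
    exact ordVal_lt_ordVal.2 (hb y hy)
  · intro z hz
    obtain ⟨w, rfl⟩ := ordVal_surj (hz.trans (ordVal_lt_theta x))
    obtain ⟨y, hyC, hwy⟩ := hu w (ordVal_lt_ordVal.1 hz)
    exact ⟨ordVal y, ⟨y, hyC, rfl⟩, ordVal_lt_ordVal.2 hwy⟩
  · intro z hz h0 hlp
    obtain ⟨w, rfl⟩ := ordVal_surj (hz.trans (ordVal_lt_theta x))
    refine ⟨w, hc w (ordVal_lt_ordVal.1 hz) (ordVal_pos_iff.1 h0) ?_, rfl⟩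
    intro v hv
    obtain ⟨s, ⟨y, hyC, rfl⟩, hvs, hsz⟩ := hlp (ordVal v) (ordVal_lt_ordVal.2 hv)
    exact ⟨y, hyC, ordVal_lt_ordVal.1 hvs, ordVal_lt_ordVal.1 hsz⟩

lemma OrdClub.isClubIn {S : Set Ordinal.{u}} {x : Θ.ToType} (h : OrdClub S (ordVal x)) :
    IsClubIn {y : Θ.ToType | ordVal y ∈ S} x := by
  obtain ⟨hb, hu, hc⟩ := h
  refine ⟨?_, ?_, ?_⟩
  · intro y hy
    exact ordVal_lt_ordVal.1 (hb _ hy)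
  · intro z hz
    obtain ⟨s, hsS, hzs⟩ := hu (ordVal z) (ordVal_lt_ordVal.2 hz)
    obtain ⟨y, rfl⟩ := ordVal_surj ((hb s hsS).trans (ordVal_lt_theta x))
    exact ⟨y, hsS, ordVal_lt_ordVal.1 hzs⟩
  · intro z hz hw hlp
    refine hc (ordVal z) (ordVal_lt_ordVal.2 hz) (ordVal_pos_iff.2 hw) ?_
    intro v hv
    obtain ⟨w, rfl⟩ := ordVal_surj (hv.trans (ordVal_lt_theta z))
    obtain ⟨y, hyS, hwy, hyz⟩ := hlp w (ordVal_lt_ordVal.1 hv)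
    exact ⟨ordVal y, hyS, ordVal_lt_ordVal.2 hwy, ordVal_lt_ordVal.2 hyz⟩

/-- Characterization of the derived set in the club topology. -/
lemma mem_dSet_iff_club {tc : TopologicalSpace Θ.ToType} (htc : IsClubTop Θ tc)
    (A : Set Θ.ToType) (x : Θ.ToType) :
    x ∈ dSet tc A ↔ Cardinal.aleph 1 ≤ (ordVal x).cof ∧
      ∀ C : Set Θ.ToType, IsClubIn C x → (C ∩ A).Nonempty := by
  letI := tc
  constructor
  · intro h
    have hcof : Cardinal.aleph 1 ≤ (ordVal x).cof := by
      by_contra hlt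
      push_neg at hlt
      have hx : ({x} : Set Θ.ToType) ∈ @nhds _ tc x :=
        (htc {x} x rfl).2 (Or.inl hlt)
      obtain ⟨V, hVsub, hVopen, hxV⟩ := mem_nhds_iff.1 hx
      obtain ⟨y, ⟨hyV, _⟩, hyx⟩ := h V hVopen hxV
      exact hyx (hVsub hyV)
    refine ⟨hcof, fun C hC => ?_⟩
    by_contra hempty
    rw [Set.not_nonempty_iff_eq_empty] at hempty
    have hU : insert x C ∈ @nhds _ tc x :=
      (htc _ x (Set.mem_insert x C)).2 (Or.inr ⟨C, Set.subset_insert x C, hC⟩)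
    obtain ⟨V, hVsub, hVopen, hxV⟩ := mem_nhds_iff.1 hU
    obtain ⟨y, ⟨hyV, hyA⟩, hyx⟩ := h V hVopen hxV
    rcases hVsub hyV with h1 | h2
    · exact hyx h1
    · have hmem : y ∈ C ∩ A := ⟨h2, hyA⟩
      rw [hempty] at hmem
      exact hmem.elim
  · rintro ⟨hcof, hmeet⟩ U hUopen hxU
    have hUopen' : @IsOpen _ tc U := hUopen
    have := (htc U x hxU).1 (hUopen'.mem_nhds hxU)
    rcases this with hlt | ⟨C, hCU, hC⟩
    · exact absurd hlt (not_lt.2 hcof)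
    · obtain ⟨y, hyC, hyA⟩ := hmeet C hC
      exact ⟨y, ⟨hCU hyC, hyA⟩, ne_of_lt (hC.1 y hyC)⟩

/-- Every ordinal club in a positive ordinal is nonempty. -/
lemma OrdClub.nonempty {S : Set Ordinal.{u}} {ξ : Ordinal.{u}} (h : OrdClub S ξ)
    (hξ : 0 < ξ) : S.Nonempty := by
  obtain ⟨s, hs, _⟩ := h.2.1 0 hξ
  exact ⟨s, hs⟩

/-- Every club in `ξ` contains points of cofinality `≥ κ`, for regular `κ < cof ξ`. -/
lemma OrdClub.exists_high_cof {S : Set Ordinal.{u}} {ξ : Ordinal.{u}} {κ : Cardinal.{u}}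
    (hS : OrdClub S ξ) (hκ : κ.IsRegular) (hlt : κ < ξ.cof) :
    ∃ s ∈ S, κ ≤ s.cof := by
  classical
  set S' : Set Ordinal.{u} := S ∪ {o | ξ ≤ o} with hS'def
  have hub : ¬ BddAbove S' := by
    rw [not_bddAbove_iff]
    exact fun a => ⟨max ξ (a + 1), Or.inr (show ξ ≤ max ξ (a + 1) from le_max_left _ _),
      (lt_add_one a).trans_le (le_max_right _ _)⟩
  set g := Ordinal.enumOrd S' with hgdef
  have hmono := Ordinal.enumOrd_strictMono hub
  have hκord : Order.IsSuccLimit κ.ord := Cardinal.isSuccLimit_ord hκ.aleph0_le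
  have key : ∀ i < κ.ord, g i < ξ := by
    intro i
    induction i using Ordinal.induction with
    | _ i IH =>
      intro hi
      have hcard : i.card < ξ.cof := (Cardinal.lt_ord.1 hi).trans hlt
      have hblt : Ordinal.blsub i (fun j _ => g j) < ξ :=
        Ordinal.blsub_lt_ord hcard (fun j hj => IH j hj (hj.trans hi))
      obtain ⟨s, hsS, hbs⟩ := hS.2.1 _ hblt
      have hgle : g i ≤ s := Ordinal.enumOrd_le_of_forall_lt (Or.inl hsS)
        (fun j hj => (Ordinal.lt_blsub _ j hj).trans hbs)
      exact hgle.trans_lt (hS.1 s hsS)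
  set y := Ordinal.bsup κ.ord (fun i (_ : i < κ.ord) => g i) with hydef
  have hgy : ∀ i, i < κ.ord → g i < y := fun i hi =>
    (hmono (Order.lt_succ i)).trans_le
      (Ordinal.le_bsup (fun i (_ : i < κ.ord) => g i) _ (hκord.succ_lt hi))
  have hyξ : y < ξ := Ordinal.bsup_lt_ord (by rw [Cardinal.card_ord]; exact hlt)
    (fun i hi => key i hi)
  have hy0 : 0 < y := (zero_le (a := _)).trans_lt (hgy 0 hκord.pos)
  have hlp : ∀ w < y, ∃ s ∈ S, w < s ∧ s < y := by
    intro w hw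
    obtain ⟨i, hi, hwi⟩ := (Ordinal.lt_bsup _).1 hw
    have hgiS : g i ∈ S := by
      rcases Ordinal.enumOrd_mem hub i with h | h
      · exact h
      · exact absurd (key i hi) (not_lt.2 h)
    exact ⟨g i, hgiS, hwi, hgy i hi⟩
  have hyS : y ∈ S := hS.2.2 y hyξ hy0 hlp
  refine ⟨y, hyS, ?_⟩
  rw [Ordinal.le_cof_iff_blsub]
  intro o f hf
  by_contra hoc
  push_neg at hoc
  have hch : ∀ i (hi : i < o), ∃ j, ∃ hj : j < κ.ord, f i hi < g j := by
    intro i hi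
    have : f i hi < y := hf ▸ Ordinal.lt_blsub f i hi
    exact (Ordinal.lt_bsup _).1 this
  choose j hj hfj using hch
  have hjb : Ordinal.bsup o j < κ.ord :=
    Ordinal.bsup_lt_ord (by rw [hκ.cof_eq]; exact hoc) hj
  have hyle : y ≤ g (Ordinal.bsup o j) := by
    rw [← hf]
    apply Ordinal.blsub_le
    intro i hi
    exact (hfj i hi).trans_le (hmono.monotone (Ordinal.le_bsup _ i hi))
  exact absurd (hyle.trans_lt (hgy _ hjb)) (lt_irrefl y)

/-- If `cof ξ ≥ ℵ₁`, there is a club in `ξ` all of whose points have cofinality `< cof ξ`. -/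
lemma exists_low_club {ξ : Ordinal.{u}} (hξ : Cardinal.aleph 1 ≤ ξ.cof) :
    ∃ S : Set Ordinal.{u}, OrdClub S ξ ∧ ∀ s ∈ S, s.cof < ξ.cof := by
  classical
  obtain ⟨f, hf⟩ := Ordinal.exists_fundamental_sequence ξ
  have haleph0 : ℵ₀ ≤ ξ.cof := (Cardinal.aleph0_le_aleph 1).trans hξ
  have hμlim : Order.IsSuccLimit ξ.cof.ord := Cardinal.isSuccLimit_ord haleph0
  set S : Set Ordinal.{u} :=
    {z | z < ξ ∧ 0 < z ∧ ∀ w < z, ∃ i, ∃ hi : i < ξ.cof.ord, w < f i hi ∧ f i hi < z} with hSdef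
  have hmem_lt : ∀ i (hi : i < ξ.cof.ord), f i hi < ξ := fun i hi => hf.lt hi
  refine ⟨S, ⟨fun s hs => hs.1, ?_, ?_⟩, ?_⟩
  · -- unbounded
    intro w hw
    have hwb : w < Ordinal.blsub ξ.cof.ord f := by rw [hf.blsub_eq]; exact hw
    obtain ⟨i₀, hi₀, hwi₀⟩ := Ordinal.lt_blsub_iff.1 hwb
    have hi' : i₀ + ω < ξ.cof.ord := by
      rw [Cardinal.lt_ord, Ordinal.card_add, Ordinal.card_omega0]
      exact Cardinal.add_lt_of_lt haleph0 (Cardinal.lt_ord.1 hi₀)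
        (Cardinal.aleph0_lt_aleph_one.trans_le hξ)
    have hi'lim : Order.IsSuccLimit (i₀ + ω) := Ordinal.isSuccLimit_add i₀ Ordinal.isSuccLimit_omega0
    set z := Ordinal.bsup (i₀ + ω) (fun j hj => f j (hj.trans hi')) with hzdef
    have hzle : z < ξ := by
      have : z ≤ f (i₀ + ω) hi' := Ordinal.bsup_le
        (fun j hj => (hf.strict_mono (hj.trans hi') hi' hj).le)
      exact this.trans_lt (hmem_lt _ hi')
    have hmemz : ∀ j (hj : j < i₀ + ω), f j (hj.trans hi') < z := fun j hj =>
      (hf.strict_mono (hj.trans hi') ((hi'lim.succ_lt hj).trans hi') (Order.lt_succ j)).trans_le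
        (Ordinal.le_bsup _ _ (hi'lim.succ_lt hj))
    have hwz : w < z := by
      have h1 : i₀ < i₀ + ω := by
        simpa using (add_lt_add_iff_left i₀).2 Ordinal.omega0_pos
      exact hwi₀.trans_lt (hmemz i₀ h1)
    refine ⟨z, ⟨hzle, (zero_le (a := w)).trans_lt hwz, ?_⟩, hwz⟩
    intro w' hw'
    obtain ⟨j, hj, hw'j⟩ := (Ordinal.lt_bsup _).1 hw'
    exact ⟨j, hj.trans hi', hw'j, hmemz j hj⟩
  · -- closed
    intro z hz h0 hlp
    refine ⟨hz, h0, ?_⟩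
    intro w hw
    obtain ⟨s, hsS, hws, hsz⟩ := hlp w hw
    obtain ⟨i, hi, hwi, his⟩ := hsS.2.2 w hws
    exact ⟨i, hi, hwi, his.trans hsz⟩
  · -- small cofinality
    rintro z ⟨hzξ, hz0, hzlp⟩
    have hzb : z < Ordinal.blsub ξ.cof.ord f := by rw [hf.blsub_eq]; exact hzξ
    obtain ⟨i₁, hi₁, hzi₁⟩ := Ordinal.lt_blsub_iff.1 hzb
    set G : ∀ j < i₁, Ordinal.{u} := fun j hj =>
      if h : f j (hj.trans hi₁) < z then f j (hj.trans hi₁) else 0 with hGdef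
    have hGlt : ∀ j (hj : j < i₁), G j hj < z := by
      intro j hj
      rw [hGdef]
      dsimp only
      split
      · assumption
      · exact hz0
    have hblG : Ordinal.blsub i₁ G = z := by
      apply le_antisymm
      · exact Ordinal.blsub_le hGlt
      · by_contra hlt
        push_neg at hlt
        obtain ⟨i, hi, hwi, hiz⟩ := hzlp _ hlt
        have hii₁ : i < i₁ := by
          by_contra hge
          push_neg at hge
          have : f i₁ hi₁ ≤ f i hi := hf.monotone hi₁ hi hge
          exact absurd (hiz.trans_le hzi₁) (not_lt.2 this)
        have hGi : G i hii₁ = f i hi := by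
          rw [hGdef]
          dsimp only
          rw [dif_pos]
          exact hiz
        have := Ordinal.lt_blsub G i hii₁
        rw [hGi] at this
        exact absurd (hwi.trans this) (lt_irrefl _)
    have : z.cof ≤ i₁.card := by
      rw [← hblG]
      exact Ordinal.cof_blsub_le G
    exact this.trans_lt (Cardinal.lt_ord.1 hi₁)

/-! ### The enumeration of regular cardinals -/

/-- The set of ordinals of regular cardinals. -/
def regSet : Set Ordinal.{u} := {o : Ordinal.{u} | ∃ c : Cardinal.{u}, c.IsRegular ∧ o = c.ord}

lemma regSet_not_bddAbove : ¬ BddAbove regSet.{u} := by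
  rw [not_bddAbove_iff]
  intro a
  refine ⟨(Order.succ (max a.card ℵ₀)).ord, ⟨_, Cardinal.isRegular_succ (le_max_right _ _), rfl⟩, ?_⟩
  rw [Cardinal.lt_ord]
  exact ((le_max_left _ _).trans_lt (Order.lt_succ _))

lemma regularEnum_eq_card (α : Ordinal.{u}) :
    regularEnum α = (Ordinal.enumOrd regSet.{u} α).card := rfl

lemma regularEnum_isRegular (α : Ordinal.{u}) : (regularEnum α).IsRegular := by
  obtain ⟨c, hc, hco⟩ := Ordinal.enumOrd_mem regSet_not_bddAbove α
  rw [regularEnum_eq_card, hco, Cardinal.card_ord]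
  exact hc

lemma ord_regularEnum (α : Ordinal.{u}) :
    (regularEnum α).ord = Ordinal.enumOrd regSet.{u} α := by
  obtain ⟨c, hc, hco⟩ := Ordinal.enumOrd_mem regSet_not_bddAbove α
  rw [regularEnum_eq_card, hco, Cardinal.card_ord, ← hco]

lemma regularEnum_lt_iff {α β : Ordinal.{u}} : regularEnum α < regularEnum β ↔ α < β := by
  rw [← Cardinal.ord_lt_ord, ord_regularEnum, ord_regularEnum]
  exact Ordinal.enumOrd_lt_enumOrd regSet_not_bddAbove

lemma regularEnum_le_iff {α β : Ordinal.{u}} : regularEnum α ≤ regularEnum β ↔ α ≤ β := by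
  rw [← Cardinal.ord_le_ord, ord_regularEnum, ord_regularEnum]
  exact Ordinal.enumOrd_le_enumOrd regSet_not_bddAbove

lemma regularEnum_surj {c : Cardinal.{u}} (hc : c.IsRegular) :
    ∃ α : Ordinal.{u}, regularEnum α = c := by
  obtain ⟨α, hα⟩ := Ordinal.enumOrd_surjective regSet_not_bddAbove
    (show c.ord ∈ regSet.{u} from ⟨c, hc, rfl⟩)
  exact ⟨α, by rw [regularEnum_eq_card, hα, Cardinal.card_ord]⟩

lemma regularEnum_one : regularEnum (1 : Ordinal.{u}) = Cardinal.aleph 1 := by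
  have hmem : (Cardinal.aleph 1).ord ∈ regSet.{u} := ⟨_, Cardinal.isRegular_aleph_one, rfl⟩
  have hne : regSet.{u}.Nonempty := ⟨(ℵ₀ : Cardinal.{u}).ord, ℵ₀, Cardinal.isRegular_aleph0, rfl⟩
  have hinf : sInf regSet.{u} = (ℵ₀ : Cardinal.{u}).ord := by
    apply le_antisymm
    · exact csInf_le' ⟨ℵ₀, Cardinal.isRegular_aleph0, rfl⟩
    · obtain ⟨c, hc, hco⟩ := csInf_mem hne
      rw [hco]
      exact Cardinal.ord_le_ord.2 hc.aleph0_le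
  apply le_antisymm
  · have h1 : Ordinal.enumOrd regSet.{u} 1 ≤ (Cardinal.aleph 1).ord := by
      apply Ordinal.enumOrd_le_of_forall_lt hmem
      intro b hb
      rw [Ordinal.lt_one_iff_zero] at hb
      subst hb
      rw [Ordinal.enumOrd_zero, hinf, Cardinal.ord_aleph0, ← Cardinal.ord_aleph0]
      exact Cardinal.ord_lt_ord.2 Cardinal.aleph0_lt_aleph_one
    calc regularEnum (1 : Ordinal.{u}) = (Ordinal.enumOrd regSet.{u} 1).card := rfl
      _ ≤ ((Cardinal.aleph 1).ord).card := Ordinal.card_le_card h1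
      _ = Cardinal.aleph 1 := Cardinal.card_ord _
  · have h0 : (ℵ₀ : Cardinal.{u}).ord < Ordinal.enumOrd regSet.{u} 1 := by
      rw [← hinf, ← Ordinal.enumOrd_zero (s := regSet.{u})]
      exact Ordinal.enumOrd_lt_enumOrd regSet_not_bddAbove |>.2 zero_lt_one
    have : (ℵ₀ : Cardinal.{u}) < regularEnum 1 := by
      rw [← Cardinal.ord_lt_ord, ord_regularEnum]
      exact h0
    rw [← Cardinal.succ_aleph0] at *
    exact Order.succ_le_iff.2 this

lemma exists_regularEnum_gt (c : Cardinal.{u}) : ∃ α : Ordinal.{u}, c < regularEnum α := by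
  obtain ⟨α, hα⟩ := regularEnum_surj (Cardinal.isRegular_succ (le_max_right c ℵ₀))
  exact ⟨α, by rw [hα]; exact (le_max_left c ℵ₀).trans_lt (Order.lt_succ _)⟩

/-! ### The iterated derived sets -/

lemma dIter_zero {X : Type u} (t : TopologicalSpace X) : dIter t 0 = Set.univ :=
  Ordinal.limitRecOn_zero _ _ _

lemma dIter_succ {X : Type u} (t : TopologicalSpace X) (o : Ordinal.{u}) :
    dIter t (o + 1) = dSet t (dIter t o) := by
  rw [Ordinal.add_one_eq_succ]
  exact Ordinal.limitRecOn_succ _ _ _ _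

lemma dIter_limit {X : Type u} (t : TopologicalSpace X) {o : Ordinal.{u}} (ho : Order.IsSuccLimit o) :
    dIter t o = ⋂ (o' : Ordinal.{u}) (_ : o' < o), dIter t o' :=
  Ordinal.limitRecOn_limit _ _ _ _ ho

/-- The main induction: the `α`-th derived set of the club space consists exactly of the
points of cofinality at least `Ω_α`. -/
lemma dIter_club_eq {Θ : Ordinal.{u}} {tc : TopologicalSpace Θ.ToType}
    (htc : IsClubTop Θ tc) :
    ∀ α : Ordinal.{u}, α ≠ 0 →
      ∀ x : Θ.ToType, x ∈ dIter tc α ↔ regularEnum α ≤ (ordVal x).cof := by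
  intro α
  induction α using Ordinal.induction with
  | _ α IH =>
    intro hα x
    rcases Ordinal.zero_or_succ_or_isSuccLimit α with h0 | ⟨β, rfl⟩ | hlim
    · exact absurd h0 hα
    · rw [← Ordinal.add_one_eq_succ, dIter_succ]
      rcases eq_or_ne β 0 with rfl | hβ
      · -- base case : the first derived set
        rw [zero_add, dIter_zero, mem_dSet_iff_club htc, regularEnum_one]
        constructor
        · exact fun h => h.1
        · intro h
          refine ⟨h, fun C hC => ?_⟩
          have h0 : 0 < ordVal x := by
            by_contra hz
            push_neg at hz
            have : ordVal x = 0 := le_antisymm hz (zero_le (a := _))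
            rw [this, Ordinal.cof_zero] at h
            exact absurd ((Cardinal.aleph0_lt_aleph_one.trans_le h).trans_le le_rfl)
              (by simp)
          obtain ⟨s, ⟨y, hyC, rfl⟩⟩ := hC.ordClub.nonempty h0
          exact ⟨y, hyC, Set.mem_univ y⟩
      · -- successor case
        have hIH := IH β (Order.lt_succ β) hβ
        have hset : dIter tc β = {y : Θ.ToType | regularEnum β ≤ (ordVal y).cof} :=
          Set.ext fun y => hIH y
        rw [hset, mem_dSet_iff_club htc]
        have hβreg := regularEnum_isRegular β
        have h1β : regularEnum (1 : Ordinal.{u}) ≤ regularEnum β :=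
          regularEnum_le_iff.2 (Ordinal.one_le_iff_ne_zero.2 hβ)
        constructor
        · rintro ⟨h1, h2⟩
          by_contra hlt
          push_neg at hlt
          have hcofreg : (ordVal x).cof.IsRegular := by
            apply Cardinal.isRegular_cof
            rw [← Ordinal.aleph0_le_cof]
            exact (Cardinal.aleph0_le_aleph 1).trans h1
          have hcofle : (ordVal x).cof ≤ regularEnum β := by
            obtain ⟨γ, hγ⟩ := regularEnum_surj hcofreg
            rw [← hγ]
            rw [← hγ, regularEnum_lt_iff, Ordinal.add_one_eq_succ, Order.lt_succ_iff] at hlt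
            exact regularEnum_le_iff.2 hlt
          obtain ⟨S, hS, hSlow⟩ := exists_low_club h1
          obtain ⟨y, hyC, hy⟩ := h2 _ hS.isClubIn
          exact absurd (hy.trans_lt ((hSlow _ hyC).trans_le hcofle)) (lt_irrefl _)
        · intro h
          have h1 : Cardinal.aleph 1 ≤ (ordVal x).cof := by
            rw [← regularEnum_one]
            exact (regularEnum_le_iff.2 (le_trans (Ordinal.one_le_iff_ne_zero.2 hβ)
              (Order.le_succ β))).trans h
          refine ⟨h1, fun C hC => ?_⟩
          have hβlt : regularEnum β < (ordVal x).cof :=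
            (regularEnum_lt_iff.2 (Order.lt_succ β)).trans_le h
          obtain ⟨s, ⟨y, hyC, rfl⟩, hcof⟩ := hC.ordClub.exists_high_cof hβreg hβlt
          exact ⟨y, hyC, hcof⟩
    · -- limit case
      rw [dIter_limit tc hlim, Set.mem_iInter₂]
      constructor
      · intro h
        have h1 : Cardinal.aleph 1 ≤ (ordVal x).cof := by
          rw [← regularEnum_one]
          exact (IH 1 (by simpa using hlim.succ_lt hlim.pos) one_ne_zero x).1 (h 1 (by simpa using hlim.succ_lt hlim.pos))
        have hcofreg : (ordVal x).cof.IsRegular := by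
          apply Cardinal.isRegular_cof
          rw [← Ordinal.aleph0_le_cof]
          exact (Cardinal.aleph0_le_aleph 1).trans h1
        obtain ⟨γ, hγ⟩ := regularEnum_surj hcofreg
        rw [← hγ, regularEnum_le_iff]
        by_contra hlt
        push_neg at hlt
        have hsucc : γ + 1 < α := hlim.succ_lt hlt
        have := (IH (γ + 1) hsucc (by
          rw [Ordinal.add_one_eq_succ]; exact Ordinal.succ_ne_zero γ) x).1 (h _ hsucc)
        rw [← hγ, regularEnum_le_iff, Ordinal.add_one_eq_succ, Order.succ_le_iff] at this
        exact absurd this (lt_irrefl γ)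
      · intro h β hβ
        rcases eq_or_ne β 0 with rfl | hβ0
        · rw [dIter_zero]; exact Set.mem_univ x
        · exact (IH β hβ hβ0 x).2 ((regularEnum_le_iff.2 hβ.le).trans h)

end AuxClub

/-- In the club topology on an ordinal `Θ`, for every nonzero `α` and every
point `ξ < Θ`: `ρ(ξ) = α` iff `cf(ξ) = Ω_α`; equivalently `ξ ∈ d^α(Θ)` iff `cf(ξ) ≥ Ω_α`. -/
theorem club_rank_eq_iff_cof (Θ : Ordinal.{u}) (tc : TopologicalSpace Θ.ToType)
    (htc : IsClubTop Θ tc) (α : Ordinal.{u}) (hα : α ≠ 0) :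
    (∀ x : Θ.ToType, ptRank tc x = α ↔ Ordinal.cof (ordVal x) = regularEnum α) ∧
      (∀ x : Θ.ToType, x ∈ dIter tc α ↔ regularEnum α ≤ Ordinal.cof (ordVal x)) := by
  have H := dIter_club_eq htc
  have hs1 : ∀ ξ : Ordinal.{u}, ξ + 1 ≠ 0 := fun ξ => by
    rw [Ordinal.add_one_eq_succ]
    exact Ordinal.succ_ne_zero ξ
  refine ⟨?_, fun x => H α hα x⟩
  intro x
  have hmemT : ∀ ξ : Ordinal.{u},
      x ∉ dIter tc (ξ + 1) ↔ (ordVal x).cof < regularEnum (ξ + 1) := by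
    intro ξ
    rw [H (ξ + 1) (hs1 ξ) x, not_le]
  have hTne : {ξ : Ordinal.{u} | x ∉ dIter tc (ξ + 1)}.Nonempty := by
    obtain ⟨γ, hγ⟩ := exists_regularEnum_gt (ordVal x).cof
    refine ⟨γ, (hmemT γ).2 (hγ.trans_le (regularEnum_le_iff.2 ?_))⟩
    rw [Ordinal.add_one_eq_succ]
    exact Order.le_succ γ
  constructor
  · intro hr
    have hαT : (ordVal x).cof < regularEnum (α + 1) := by
      have h' := csInf_mem hTne
      rw [show sInf {ξ : Ordinal.{u} | x ∉ dIter tc (ξ + 1)} = ptRank tc x from rfl, hr] at h'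
      exact (hmemT α).1 h'
    have hlb : ∀ ξ < α, regularEnum (ξ + 1) ≤ (ordVal x).cof := by
      intro ξ hξ
      by_contra hlt
      push_neg at hlt
      have hξT : ξ ∈ {ξ : Ordinal.{u} | x ∉ dIter tc (ξ + 1)} := (hmemT ξ).2 hlt
      have : ptRank tc x ≤ ξ := csInf_le' hξT
      rw [hr] at this
      exact absurd (this.trans_lt hξ) (lt_irrefl α)
    have h1 : Cardinal.aleph 1 ≤ (ordVal x).cof := by
      have := hlb 0 (pos_iff_ne_zero.2 hα)
      rwa [zero_add, regularEnum_one] at this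
    have hcofreg : (ordVal x).cof.IsRegular := by
      apply Cardinal.isRegular_cof
      rw [← Ordinal.aleph0_le_cof]
      exact (Cardinal.aleph0_le_aleph 1).trans h1
    obtain ⟨β, hβ⟩ := regularEnum_surj hcofreg
    rw [← hβ]
    congr 1
    have hβle : β ≤ α := by
      rw [← hβ, regularEnum_lt_iff, Ordinal.add_one_eq_succ, Order.lt_succ_iff] at hαT
      exact hαT
    have hαle : α ≤ β := by
      by_contra hlt
      push_neg at hlt
      have := hlb β hlt
      rw [← hβ, regularEnum_le_iff, Ordinal.add_one_eq_succ, Order.succ_le_iff] at this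
      exact absurd this (lt_irrefl β)
    exact le_antisymm hβle hαle
  · intro hc
    have hT : {ξ : Ordinal.{u} | x ∉ dIter tc (ξ + 1)} = Set.Ici α := by
      ext ξ
      rw [Set.mem_setOf_eq, hmemT ξ, hc, regularEnum_lt_iff, Ordinal.add_one_eq_succ,
        Order.lt_succ_iff, Set.mem_Ici]
    unfold ptRank
    rw [hT]
    exact csInf_Ici

end
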